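/- arXiv:1704.07124 — 5 statements merged into one kernel-verified Lean document; each statement's English description precedes it below -/
import Mathlib

section
/- Under Assumption 1, for every state s ∈ X_c^0 of the composed abstraction S_c and every input u ∈ U_c, the transition set δ_c(s,u) is nonempty; consequently the set of enabled inputs satisfies U_c(s) = U_c for all s ∈ X_c^0. -/
open Set Function

/-- `ℝⁿ` modeled as `Fin n → ℝ`. -/
abbrev Vec (n : ℕ) : Type := Fin n → ℝ

/-- Projection `π_{I'}` of a dependent tuple onto the components with indices in `I'`. -/
def proj {ι : Type*} (E : ι → Type*) (I' : Set ι) (x : (i : ι) → E i) : (i : I') → E i.1 :=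
  fun i => x i.1

/-- `P` is a finite partition of `A`: finitely many nonempty pairwise disjoint cells covering `A`. -/
def IsFinPartition {α : Type*} (P : Set (Set α)) (A : Set α) : Prop :=
  P.Finite ∧ (∀ s ∈ P, s.Nonempty) ∧ ⋃₀ P = A ∧
    ∀ s ∈ P, ∀ t ∈ P, s ≠ t → Disjoint s t

/-- The family `A : τ → Set α` is a partition of the index type `α`. -/
def IsIndexPartition {τ α : Type*} (A : τ → Set α) : Prop :=
  (⋃ σ, A σ) = Set.univ ∧ Pairwise (Disjoint on A)

/-- The set `𝒫` of cells `s₁ × ⋯ × s_n̄`, `s_i ∈ 𝒫_i`, of the product partition. -/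
def cells {ι : Type*} {E : ι → Type*} (P : (i : ι) → Set (Set (E i))) :
    Set (Set ((i : ι) → E i)) :=
  { s | ∃ f : (i : ι) → Set (E i), (∀ i, f i ∈ P i) ∧ s = Set.pi Set.univ f }

/-- The set `X_σ⁰` of cells `∏_{i ∈ I'} s_i`, `s_i ∈ 𝒫_i`, of the partition restricted to `I'`. -/
def cellsOn {ι : Type*} {E : ι → Type*} (P : (i : ι) → Set (Set (E i))) (I' : Set ι) :
    Set (Set ((i : I') → E i.1)) :=
  { s | ∃ f : (i : ι) → Set (E i), (∀ i, f i ∈ P i) ∧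
        s = Set.pi Set.univ (fun i : I' => f i.1) }

/-- `F(𝒳',𝒰') = ⋃_{x ∈ 𝒳', u ∈ 𝒰'} F(x,u)`. -/
def Fset {X U : Type*} (F : X → U → Set X) (A : Set X) (B : Set U) : Set X :=
  ⋃ x ∈ A, ⋃ u ∈ B, F x u

/-- `Φ_σ(s_σ,u_σ) = F̄(𝒳 ∩ π_{I_σ}⁻¹(s_σ), 𝒰 ∩ π_{J_σ}⁻¹({u_σ}))`. -/
def Phi {ι κ : Type*} (E : ι → Type*) (Fu : κ → Type*)
    (Fbar : Set ((i : ι) → E i) → Set ((j : κ) → Fu j) → Set ((i : ι) → E i))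
    (Xset : Set ((i : ι) → E i)) (Uset : Set ((j : κ) → Fu j))
    (Iσ : Set ι) (Jσ : Set κ)
    (sσ : Set ((i : Iσ) → E i.1)) (uσ : (j : Jσ) → Fu j.1) : Set ((i : ι) → E i) :=
  Fbar (Xset ∩ proj E Iσ ⁻¹' sσ) (Uset ∩ proj Fu Jσ ⁻¹' {uσ})

/-- `Out_σ = π_{I_σ}(ℝⁿ) \ 𝒳_{I_σ}`. -/
def OutOf {ι : Type*} (E : ι → Type*) (Iσ : Set ι) (Xset : Set ((i : ι) → E i)) :
    Set ((i : Iσ) → E i.1) :=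
  proj E Iσ '' Set.univ \ proj E Iσ '' Xset

/-- Transition map `δ_σ` of the symbolic subsystem `S_σ`. -/
def deltaSub {ι κ : Type*} (E : ι → Type*) (Fu : κ → Type*)
    (Fbar : Set ((i : ι) → E i) → Set ((j : κ) → Fu j) → Set ((i : ι) → E i))
    (Xset : Set ((i : ι) → E i)) (Uset : Set ((j : κ) → Fu j))
    (P : (i : ι) → Set (Set (E i))) (V : (j : κ) → Set (Fu j))
    (Iσ Icσ : Set ι) (Jσ : Set κ)
    (sσ : Set ((i : Iσ) → E i.1)) (uσ : (j : Jσ) → Fu j.1) :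
    Set (Set ((i : Iσ) → E i.1)) :=
  { s' | sσ ∈ cellsOn P Iσ ∧ uσ ∈ Set.pi Set.univ (fun j : Jσ => V j.1) ∧
      ((s' ∈ cellsOn P Iσ ∧
          (s' ∩ proj E Iσ '' Phi E Fu Fbar Xset Uset Iσ Jσ sσ uσ).Nonempty) ∨
        (s' = OutOf E Iσ Xset ∧
          (proj E Iσ '' Phi E Fu Fbar Xset Uset Iσ Jσ sσ uσ ∩ proj E Iσ '' Xset = ∅ ∨
            ¬proj E Icσ '' Phi E Fu Fbar Xset Uset Iσ Jσ sσ uσ ⊆ proj E Icσ '' Xset))) }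

/-- Transition map `δ_c` of the composed abstraction `S_c`. -/
def deltaC {ι κ τ : Type*} (E : ι → Type*) (Fu : κ → Type*)
    (Fbar : Set ((i : ι) → E i) → Set ((j : κ) → Fu j) → Set ((i : ι) → E i))
    (Xset : Set ((i : ι) → E i)) (Uset : Set ((j : κ) → Fu j))
    (P : (i : ι) → Set (Set (E i))) (V : (j : κ) → Set (Fu j))
    (Im Ic : τ → Set ι) (Jm : τ → Set κ)
    (s : Set ((i : ι) → E i)) (u : (j : κ) → Fu j) :
    Set (Set ((i : ι) → E i)) :=
  { s' | s ∈ cells P ∧ u ∈ Set.pi Set.univ V ∧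
      ((s' ∈ cells P ∧ ∀ σ : τ,
          proj E (Im σ) '' s' ∈
            deltaSub E Fu Fbar Xset Uset P V (Im σ) (Ic σ) (Jm σ)
              (proj E (Im σ) '' s) (proj Fu (Jm σ) u)) ∨
        (s' = Xsetᶜ ∧ ∃ σ : τ,
          OutOf E (Im σ) Xset ∈
            deltaSub E Fu Fbar Xset Uset P V (Im σ) (Ic σ) (Jm σ)
              (proj E (Im σ) '' s) (proj Fu (Jm σ) u))) }

/-- Safety controller for the transition map `δ` and the safe set `safe`. -/
def IsSafetyController {X U : Type*} (δ : X → U → Set X) (safe : Set X) (C : X → Set U) : Prop :=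
  (∀ x, ∀ u ∈ C x, (δ x u).Nonempty) ∧
  (∀ x, (C x).Nonempty → x ∈ safe) ∧
  (∀ x, ∀ u ∈ C x, ∀ x', x' ∈ δ x u → (C x').Nonempty)

/-- Maximal safety controller. -/
def IsMaximalSafetyController {X U : Type*} (δ : X → U → Set X) (safe : Set X)
    (Cstar : X → Set U) : Prop :=
  IsSafetyController δ safe Cstar ∧
    ∀ C, IsSafetyController δ safe C → ∀ x, C x ⊆ Cstar x

/-- Feedback refinement relation (over a common input type). -/
def IsFeedbackRefinement {Xa Xb U : Type*} (δa : Xa → U → Set Xa) (δb : Xb → U → Set Xb)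
    (H : Xa → Xb) : Prop :=
  ∀ xa : Xa,
    (∀ u, (δb (H xa) u).Nonempty → (δa xa u).Nonempty) ∧
    (∀ u, (δb (H xa) u).Nonempty → H '' δa xa u ⊆ δb (H xa) u)

/-- Concrete transition map of `S = (ℝⁿ, 𝒰, F)` (inputs restricted to `𝒰`). -/
def deltaConc {X U : Type*} (F : X → U → Set X) (Uset : Set U) (x : X) (u : U) : Set X :=
  { x' | u ∈ Uset ∧ x' ∈ F x u }

open Classical in
lemma proj_image_pi {ι : Type*} {E : ι → Type*} (I' : Set ι) (f : (i : ι) → Set (E i))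
    (hf : ∀ i, (f i).Nonempty) :
    proj E I' '' Set.pi Set.univ f = Set.pi Set.univ (fun i : I' => f i.1) := by
  ext y
  constructor
  · rintro ⟨x, hx, rfl⟩ i _
    exact hx i.1 trivial
  · intro hy
    refine ⟨fun i => if h : i ∈ I' then y ⟨i, h⟩ else (hf i).choose, fun i _ => ?_, ?_⟩
    · by_cases h : i ∈ I'
      · simpa [h] using hy ⟨i, h⟩ trivial
      · simpa [h] using (hf i).choose_spec
    · funext i
      simp [proj, i.2]

theorem stmt0
    {ι κ τ : Type*} [Finite ι] [Finite κ] [Finite τ]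
    (nd : ι → ℕ) (pd : κ → ℕ)
    (𝒳i : (i : ι) → Set (Vec (nd i))) (𝒰j : (j : κ) → Set (Vec (pd j)))
    (F : ((i : ι) → Vec (nd i)) → ((j : κ) → Vec (pd j)) → Set ((i : ι) → Vec (nd i)))
    (Fbar : Set ((i : ι) → Vec (nd i)) → Set ((j : κ) → Vec (pd j)) →
      Set ((i : ι) → Vec (nd i)))
    (P : (i : ι) → Set (Set (Vec (nd i)))) (V : (j : κ) → Set (Vec (pd j)))
    (Im Ic : τ → Set ι) (Jm : τ → Set κ)
    (hF : ∀ x u, u ∈ Set.pi Set.univ 𝒰j → (F x u).Nonempty)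
    (hFbar : ∀ A B, Fset F A B ⊆ Fbar A B)
    (hP : ∀ i, IsFinPartition (P i) (𝒳i i))
    (hV : ∀ j, (V j).Finite ∧ V j ⊆ 𝒰j j)
    (hIc : IsIndexPartition Ic) (hIcne : ∀ σ, (Ic σ).Nonempty) (hIcIm : ∀ σ, Ic σ ⊆ Im σ)
    (hJ : IsIndexPartition Jm) (hJne : ∀ σ, (Jm σ).Nonempty) :
    ∀ s ∈ cells P,
      (∀ u ∈ Set.pi Set.univ V, (deltaC (fun i => Vec (nd i)) (fun j => Vec (pd j)) Fbar (Set.pi Set.univ 𝒳i) (Set.pi Set.univ 𝒰j) P V Im Ic Jm s u).Nonempty) ∧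
      {u | (deltaC (fun i => Vec (nd i)) (fun j => Vec (pd j)) Fbar (Set.pi Set.univ 𝒳i) (Set.pi Set.univ 𝒰j) P V Im Ic Jm s u).Nonempty} = Set.pi Set.univ V := by
  intro s hs
  obtain ⟨f, hfP, rfl⟩ := hs
  have hfne : ∀ i, (f i).Nonempty := fun i => (hP i).2.1 _ (hfP i)
  have hfsub : ∀ i, f i ⊆ 𝒳i i := fun i x hx => by
    rw [← (hP i).2.2.1]; exact ⟨f i, hfP i, hx⟩
  have hscells : Set.pi Set.univ f ∈ cells P := ⟨f, hfP, rfl⟩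
  have key : ∀ u ∈ Set.pi Set.univ V,
      (deltaC (fun i => Vec (nd i)) (fun j => Vec (pd j)) Fbar (Set.pi Set.univ 𝒳i)
        (Set.pi Set.univ 𝒰j) P V Im Ic Jm (Set.pi Set.univ f) u).Nonempty := by
    intro u hu
    obtain ⟨x, hx⟩ : (Set.pi Set.univ f).Nonempty := Set.univ_pi_nonempty_iff.2 hfne
    have hxX : x ∈ Set.pi Set.univ 𝒳i := fun i _ => hfsub i (hx i trivial)
    have huU : u ∈ Set.pi Set.univ 𝒰j := fun j _ => (hV j).2 (hu j trivial)
    obtain ⟨x', hx'⟩ := hF x u huU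
    have hx'Phi : ∀ σ : τ, x' ∈ Phi (fun i => Vec (nd i)) (fun j => Vec (pd j)) Fbar
        (Set.pi Set.univ 𝒳i) (Set.pi Set.univ 𝒰j) (Im σ) (Jm σ)
        (proj (fun i => Vec (nd i)) (Im σ) '' Set.pi Set.univ f)
        (proj (fun j => Vec (pd j)) (Jm σ) u) := by
      intro σ
      apply hFbar
      simp only [Fset, Set.mem_iUnion]
      exact ⟨x, ⟨hxX, ⟨x, hx, rfl⟩⟩, u, ⟨huU, rfl⟩, hx'⟩
    have hscellsOn : ∀ σ : τ, proj (fun i => Vec (nd i)) (Im σ) '' Set.pi Set.univ f ∈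
        cellsOn P (Im σ) := fun σ => ⟨f, hfP, proj_image_pi _ f hfne⟩
    have huσ : ∀ σ : τ, proj (fun j => Vec (pd j)) (Jm σ) u ∈
        Set.pi Set.univ (fun j : (Jm σ) => V j.1) := fun σ j _ => hu j.1 trivial
    by_cases hx'X : x' ∈ Set.pi Set.univ 𝒳i
    · have hg : ∀ i, ∃ t ∈ P i, x' i ∈ t := by
        intro i
        have h1 := hx'X i trivial
        rw [← (hP i).2.2.1] at h1
        exact h1
      choose g hgP hgx using hg
      have hgne : ∀ i, (g i).Nonempty := fun i => ⟨x' i, hgx i⟩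
      have hx's' : x' ∈ Set.pi Set.univ g := fun i _ => hgx i
      refine ⟨Set.pi Set.univ g, hscells, hu, Or.inl ⟨⟨g, hgP, rfl⟩, fun σ => ?_⟩⟩
      exact ⟨hscellsOn σ, huσ σ, Or.inl ⟨⟨g, hgP, proj_image_pi _ g hgne⟩,
        ⟨proj (fun i => Vec (nd i)) (Im σ) x', ⟨x', hx's', rfl⟩, ⟨x', hx'Phi σ, rfl⟩⟩⟩⟩
    · obtain ⟨i0, hi0⟩ : ∃ i, x' i ∉ 𝒳i i := by
        by_contra h
        push_neg at h
        exact hx'X fun i _ => h i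
      obtain ⟨σ0, hσ0⟩ : ∃ σ, i0 ∈ Ic σ := by
        have : i0 ∈ ⋃ σ, Ic σ := by rw [hIc.1]; trivial
        simpa using this
      refine ⟨(Set.pi Set.univ 𝒳i)ᶜ, hscells, hu, Or.inr ⟨rfl, σ0,
        hscellsOn σ0, huσ σ0, Or.inr ⟨rfl, Or.inr ?_⟩⟩⟩
      intro h
      obtain ⟨y, hyX, heq⟩ := h ⟨x', hx'Phi σ0, rfl⟩
      apply hi0
      have h2 : y i0 = x' i0 := congrFun heq ⟨i0, hσ0⟩
      rw [← h2]
      exact hyX i0 trivial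
  refine ⟨key, Set.ext fun u => ⟨fun ⟨s', h⟩ => h.2.1, key u⟩⟩
end

section
/- Under Assumption 1, the map H : ℝ^n → X_c defined by H(x) = s if and only if x ∈ s (well defined because X_c is a partition of ℝ^n) is a feedback refinement relation from the concrete system S = (ℝ^n, 𝒰, F) to the composed abstraction S_c, i.e., for all x ∈ ℝ^n with s = H(x): U_c(s) ⊆ U(x), and for all u ∈ U_c(s), H(δ(x,u)) ⊆ δ_c(s,u). -/
open Set Function

lemma proj_pi_image {ι : Type*} {E : ι → Type*} (I' : Set ι) (f : (i : ι) → Set (E i))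
    (hne : ∀ i, (f i).Nonempty) :
    proj E I' '' Set.pi Set.univ f = Set.pi Set.univ (fun i : I' => f i.1) := by
  classical
  ext y
  constructor
  · rintro ⟨x, hx, rfl⟩ i _
    exact hx i.1 trivial
  · intro hy
    choose g hg using hne
    refine ⟨fun i => if h : i ∈ I' then y ⟨i, h⟩ else g i, fun i _ => ?_, ?_⟩
    · by_cases h : i ∈ I'
      · simpa [h] using hy ⟨i, h⟩ trivial
      · simpa [h] using hg i
    · funext i
      simp [proj, i.2]

theorem stmt1
    {ι κ τ : Type*} [Finite ι] [Finite κ] [Finite τ]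
    (nd : ι → ℕ) (pd : κ → ℕ)
    (𝒳i : (i : ι) → Set (Vec (nd i))) (𝒰j : (j : κ) → Set (Vec (pd j)))
    (F : ((i : ι) → Vec (nd i)) → ((j : κ) → Vec (pd j)) → Set ((i : ι) → Vec (nd i)))
    (Fbar : Set ((i : ι) → Vec (nd i)) → Set ((j : κ) → Vec (pd j)) →
      Set ((i : ι) → Vec (nd i)))
    (P : (i : ι) → Set (Set (Vec (nd i)))) (V : (j : κ) → Set (Vec (pd j)))
    (Im Ic : τ → Set ι) (Jm : τ → Set κ)
    (hF : ∀ x u, u ∈ Set.pi Set.univ 𝒰j → (F x u).Nonempty)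
    (hFbar : ∀ A B, Fset F A B ⊆ Fbar A B)
    (hP : ∀ i, IsFinPartition (P i) (𝒳i i))
    (hV : ∀ j, (V j).Finite ∧ V j ⊆ 𝒰j j)
    (hIc : IsIndexPartition Ic) (hIcne : ∀ σ, (Ic σ).Nonempty) (hIcIm : ∀ σ, Ic σ ⊆ Im σ)
    (hJ : IsIndexPartition Jm) (hJne : ∀ σ, (Jm σ).Nonempty)
    (H : ((i : ι) → Vec (nd i)) → Set ((i : ι) → Vec (nd i)))
    (hH : ∀ x, x ∈ H x ∧ (H x ∈ cells P ∨ H x = (Set.pi Set.univ 𝒳i)ᶜ)) :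
    IsFeedbackRefinement (deltaConc F (Set.pi Set.univ 𝒰j)) (deltaC (fun i => Vec (nd i)) (fun j => Vec (pd j)) Fbar (Set.pi Set.univ 𝒳i) (Set.pi Set.univ 𝒰j) P V Im Ic Jm) H := by
  intro x
  constructor
  · rintro u ⟨s', hsc, huV, -⟩
    have hu' : u ∈ Set.pi Set.univ 𝒰j := fun j hj => (hV j).2 (huV j hj)
    obtain ⟨x', hx'⟩ := hF x u hu'
    exact ⟨x', hu', hx'⟩
  · rintro u ⟨s0, hsc, huV, -⟩ y ⟨x', ⟨huU, hx'F⟩, rfl⟩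
    obtain ⟨f, hf, hHx⟩ := hsc
    have hfne : ∀ i, (f i).Nonempty := fun i => (hP i).2.1 _ (hf i)
    have hxmem : x ∈ H x := (hH x).1
    have hxX : x ∈ Set.pi Set.univ 𝒳i := by
      intro i _
      have h1 : x i ∈ f i := by rw [hHx] at hxmem; exact hxmem i trivial
      have hsub : f i ⊆ 𝒳i i := (hP i).2.2.1 ▸ Set.subset_sUnion_of_mem (hf i)
      exact hsub h1
    have hPhi : ∀ σ, x' ∈ Phi (fun i => Vec (nd i)) (fun j => Vec (pd j)) Fbar
        (Set.pi Set.univ 𝒳i) (Set.pi Set.univ 𝒰j) (Im σ) (Jm σ)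
        (proj (fun i => Vec (nd i)) (Im σ) '' H x)
        (proj (fun j => Vec (pd j)) (Jm σ) u) := by
      intro σ
      apply hFbar
      exact Set.mem_biUnion ⟨hxX, ⟨x, hxmem, rfl⟩⟩
        (Set.mem_biUnion ⟨huU, rfl⟩ hx'F)
    have hsσ : ∀ σ, proj (fun i => Vec (nd i)) (Im σ) '' H x ∈ cellsOn P (Im σ) :=
      fun σ => ⟨f, hf, by rw [hHx, proj_pi_image _ _ hfne]⟩
    have huσ : ∀ σ, proj (fun j => Vec (pd j)) (Jm σ) u ∈
        Set.pi Set.univ (fun j : (Jm σ) => V j.1) :=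
      fun σ j _ => huV j.1 trivial
    refine ⟨⟨f, hf, hHx⟩, huV, ?_⟩
    rcases (hH x').2 with hA | hB
    · obtain ⟨f', hf', hHx'⟩ := hA
      have hf'ne : ∀ i, (f' i).Nonempty := fun i => (hP i).2.1 _ (hf' i)
      refine Or.inl ⟨⟨f', hf', hHx'⟩, fun σ => ?_⟩
      refine ⟨hsσ σ, huσ σ, Or.inl ⟨⟨f', hf', by rw [hHx', proj_pi_image _ _ hf'ne]⟩, ?_⟩⟩
      exact ⟨proj (fun i => Vec (nd i)) (Im σ) x',
        ⟨x', (hH x').1, rfl⟩, ⟨x', hPhi σ, rfl⟩⟩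
    · have hx'X : x' ∉ Set.pi Set.univ 𝒳i := by
        have := (hH x').1
        rw [hB] at this
        exact this
      have : ∃ i, x' i ∉ 𝒳i i := by
        by_contra h
        push_neg at h
        exact hx'X fun i _ => h i
      obtain ⟨i, hi⟩ := this
      have : ∃ σ, i ∈ Ic σ := by
        have := hIc.1
        have hmem : i ∈ ⋃ σ, Ic σ := by rw [this]; trivial
        exact Set.mem_iUnion.mp hmem
      obtain ⟨σ, hiσ⟩ := this
      refine Or.inr ⟨hB, σ, hsσ σ, huσ σ, Or.inr ⟨rfl, Or.inr ?_⟩⟩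
      intro hsub
      obtain ⟨z, hz, hze⟩ := hsub ⟨x', hPhi σ, rfl⟩
      have hzi : z i = x' i := congrFun hze ⟨i, hiσ⟩
      exact hi (hzi ▸ hz i trivial)
end

section
/- Let S_a=(X_a,U_a,δ_a) and S_b=(X_b,U_b,δ_b) be transition systems with U_b ⊆ U_a, and let H : X_a → X_b be a feedback refinement relation from S_a to S_b. If C_b : X_b → 2^{U_b} is a safety controller for S_b and a safe set 𝒳_b ⊆ X_b, then the map C_a : X_a → 2^{U_a} defined by C_a(x_a) = C_b(H(x_a)) is a safety controller for S_a and the safe set 𝒳_a = H^{-1}(𝒳_b). -/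
open Set Function

theorem stmt7 {Xa Xb U : Type*} (δa : Xa → U → Set Xa) (δb : Xb → U → Set Xb)
    (H : Xa → Xb) (hH : IsFeedbackRefinement δa δb H)
    (safeB : Set Xb) (Cb : Xb → Set U) (hCb : IsSafetyController δb safeB Cb) :
    IsSafetyController δa (H ⁻¹' safeB) (fun xa => Cb (H xa)) := by
  obtain ⟨h1, h2, h3⟩ := hCb
  refine ⟨?_, ?_, ?_⟩
  · intro x u hu
    exact (hH x).1 u (h1 _ u hu)
  · intro x hx
    exact h2 _ hx
  · intro x u hu x' hx'
    have hne := h1 _ u hu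
    have := (hH x).2 u hne ⟨x', hx', rfl⟩
    exact h3 _ u hu _ this
end

section
/- Under Assumption 1, for every s ∈ X_c^0 = 𝒫 and u ∈ U_c = 𝒱: if π_{I_σ^c}(Φ_σ(s_{I_σ},u_{J_σ})) ⊆ 𝒳_{I_σ^c} for all σ ∈ Σ, then F(s,{u}) ⊆ 𝒳. -/
open Set Function

theorem stmt12
    {ι κ τ : Type*} [Finite ι] [Finite κ] [Finite τ]
    (nd : ι → ℕ) (pd : κ → ℕ)
    (𝒳i : (i : ι) → Set (Vec (nd i))) (𝒰j : (j : κ) → Set (Vec (pd j)))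
    (F : ((i : ι) → Vec (nd i)) → ((j : κ) → Vec (pd j)) → Set ((i : ι) → Vec (nd i)))
    (Fbar : Set ((i : ι) → Vec (nd i)) → Set ((j : κ) → Vec (pd j)) →
      Set ((i : ι) → Vec (nd i)))
    (P : (i : ι) → Set (Set (Vec (nd i)))) (V : (j : κ) → Set (Vec (pd j)))
    (Im Ic : τ → Set ι) (Jm : τ → Set κ)
    (hF : ∀ x u, u ∈ Set.pi Set.univ 𝒰j → (F x u).Nonempty)
    (hFbar : ∀ A B, Fset F A B ⊆ Fbar A B)
    (hP : ∀ i, IsFinPartition (P i) (𝒳i i))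
    (hV : ∀ j, (V j).Finite ∧ V j ⊆ 𝒰j j)
    (hIc : IsIndexPartition Ic) (hIcne : ∀ σ, (Ic σ).Nonempty) (hIcIm : ∀ σ, Ic σ ⊆ Im σ)
    (hJ : IsIndexPartition Jm) (hJne : ∀ σ, (Jm σ).Nonempty) :
    ∀ s ∈ cells P, ∀ u ∈ Set.pi Set.univ V,
      (∀ σ, proj (fun i => Vec (nd i)) (Ic σ) ''
          Phi (fun i => Vec (nd i)) (fun j => Vec (pd j)) Fbar (Set.pi Set.univ 𝒳i) (Set.pi Set.univ 𝒰j) (Im σ) (Jm σ) (proj (fun i => Vec (nd i)) (Im σ) '' s) (proj (fun j => Vec (pd j)) (Jm σ) u) ⊆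
        proj (fun i => Vec (nd i)) (Ic σ) '' (Set.pi Set.univ 𝒳i)) →
      Fset F s {u} ⊆ (Set.pi Set.univ 𝒳i) := by
  intro s hs u hu hsafe x' hx'
  obtain ⟨f, hf, rfl⟩ := hs
  simp only [Fset, Set.mem_iUnion, Set.mem_singleton_iff] at hx'
  obtain ⟨x, hx, u', rfl, hx'⟩ := hx'
  have hsub : Set.pi Set.univ f ⊆ Set.pi Set.univ 𝒳i := by
    intro y hy i _
    have h1 : f i ⊆ 𝒳i i := (hP i).2.2.1 ▸ Set.subset_sUnion_of_mem (hf i)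
    exact h1 (hy i trivial)
  have hxX : x ∈ Set.pi Set.univ 𝒳i := hsub hx
  have huU : u' ∈ Set.pi Set.univ 𝒰j := fun j _ => (hV j).2 (hu j trivial)
  intro i _
  obtain ⟨σ, hiσ⟩ : ∃ σ, i ∈ Ic σ := by
    have := hIc.1
    have : i ∈ ⋃ σ, Ic σ := this ▸ Set.mem_univ i
    exact Set.mem_iUnion.mp this
  have hPhi : x' ∈ Phi (fun i => Vec (nd i)) (fun j => Vec (pd j)) Fbar
      (Set.pi Set.univ 𝒳i) (Set.pi Set.univ 𝒰j) (Im σ) (Jm σ)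
      (proj (fun i => Vec (nd i)) (Im σ) '' Set.pi Set.univ f)
      (proj (fun j => Vec (pd j)) (Jm σ) u') := by
    apply hFbar
    simp only [Fset, Set.mem_iUnion]
    exact ⟨x, ⟨hxX, ⟨x, hx, rfl⟩⟩, u', ⟨huU, rfl⟩, hx'⟩
  have := hsafe σ ⟨x', hPhi, rfl⟩
  obtain ⟨y, hy, hyproj⟩ := this
  have : y i = x' i := congrFun hyproj ⟨i, hiσ⟩
  exact this ▸ hy i trivial
end

section
/- Under Assumptions 1, 2 and 3, for every σ̂ ∈ Σ̂ with σ = γ(σ̂), every s ∈ 𝒫 and every u ∈ 𝒱, the inclusion Φ_σ(s_{I_σ}, u_{J_σ}) ⊆ Φ̂_σ̂(s_{Î_σ̂}, u_{Ĵ_σ̂}) holds. -/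
open Set Function

theorem stmt13
    {ι κ τ : Type*} [Finite ι] [Finite κ] [Finite τ]
    (nd : ι → ℕ) (pd : κ → ℕ)
    (𝒳i : (i : ι) → Set (Vec (nd i))) (𝒰j : (j : κ) → Set (Vec (pd j)))
    (F : ((i : ι) → Vec (nd i)) → ((j : κ) → Vec (pd j)) → Set ((i : ι) → Vec (nd i)))
    (Fbar : Set ((i : ι) → Vec (nd i)) → Set ((j : κ) → Vec (pd j)) →
      Set ((i : ι) → Vec (nd i)))
    (P : (i : ι) → Set (Set (Vec (nd i)))) (V : (j : κ) → Set (Vec (pd j)))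
    (Im Ic : τ → Set ι) (Jm : τ → Set κ)
    (hF : ∀ x u, u ∈ Set.pi Set.univ 𝒰j → (F x u).Nonempty)
    (hFbar : ∀ A B, Fset F A B ⊆ Fbar A B)
    (hP : ∀ i, IsFinPartition (P i) (𝒳i i))
    (hV : ∀ j, (V j).Finite ∧ V j ⊆ 𝒰j j)
    (hIc : IsIndexPartition Ic) (hIcne : ∀ σ, (Ic σ).Nonempty) (hIcIm : ∀ σ, Ic σ ⊆ Im σ)
    (hJ : IsIndexPartition Jm) (hJne : ∀ σ, (Jm σ).Nonempty)
    {τ' : Type*} [Finite τ']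
    (Im' Ic' : τ' → Set ι) (Jm' : τ' → Set κ)
    (hIc' : IsIndexPartition Ic') (hIcne' : ∀ σ', (Ic' σ').Nonempty)
    (hIcIm' : ∀ σ', Ic' σ' ⊆ Im' σ')
    (hJ' : IsIndexPartition Jm') (hJne' : ∀ σ', (Jm' σ').Nonempty)
    (γ : τ' → τ) (hγ : Function.Surjective γ)
    (hA2 : ∀ σ', Ic' σ' ⊆ Ic (γ σ') ∧ Im' σ' ⊆ Im (γ σ') ∧ Jm' σ' ⊆ Jm (γ σ'))
    (hMono : ∀ A A' B B', A ⊆ A' → B ⊆ B' → B' ⊆ Set.pi Set.univ 𝒰j → Fbar A B ⊆ Fbar A' B') :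
    ∀ σ' : τ', ∀ s ∈ cells P, ∀ u ∈ Set.pi Set.univ V,
      Phi (fun i => Vec (nd i)) (fun j => Vec (pd j)) Fbar (Set.pi Set.univ 𝒳i) (Set.pi Set.univ 𝒰j) (Im (γ σ')) (Jm (γ σ')) (proj (fun i => Vec (nd i)) (Im (γ σ')) '' s) (proj (fun j => Vec (pd j)) (Jm (γ σ')) u) ⊆
        Phi (fun i => Vec (nd i)) (fun j => Vec (pd j)) Fbar (Set.pi Set.univ 𝒳i) (Set.pi Set.univ 𝒰j) (Im' σ') (Jm' σ') (proj (fun i => Vec (nd i)) (Im' σ') '' s) (proj (fun j => Vec (pd j)) (Jm' σ') u) := by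
  intro σ' s hs u hu
  unfold Phi
  apply hMono
  · rintro x ⟨hxX, y, hys, hyx⟩
    refine ⟨hxX, y, hys, ?_⟩
    funext i
    exact congrFun hyx ⟨i.1, (hA2 σ').2.1 i.2⟩
  · rintro v ⟨hvU, hv⟩
    refine ⟨hvU, ?_⟩
    simp only [Set.mem_preimage, Set.mem_singleton_iff] at hv ⊢
    funext j
    exact congrFun hv ⟨j.1, (hA2 σ').2.2 j.2⟩
  · exact fun v hv => hv.1
end
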